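/- Let G be a topological group, Γ a discrete subgroup, and let μ_G denote a Haar measure on G. If E ⊆ G/Γ is a measurable set whose preimage in G is μ_G-null (i.e. E has measure zero with respect to the induced measure on G/Γ), then for any Borel probability measure λ on G/Γ and any bounded nonempty open set U ⊆ G, the averaged measure ν defined by ν(A) = ∫_{u∈U} (u_*λ)(A) dμ_G(u) satisfies ν(E) = 0. -/

import Mathlib

open MeasureTheory QuotientGroup Pointwise ENNReal


/-- A discrete subgroup of a second countable topological group admits a measurable
section of the quotient map. -/
lemma exists_measurable_section_aux {G : Type*} [Group G] [TopologicalSpace G]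
    [IsTopologicalGroup G] [SecondCountableTopology G] [MeasurableSpace G] [BorelSpace G]
    (Γ : Subgroup G) (hΓ : DiscreteTopology Γ) :
    ∃ s : G ⧸ Γ → G, Measurable s ∧ ∀ x, (QuotientGroup.mk (s x) : G ⧸ Γ) = x := by
  classical
  haveI : Countable Γ := TopologicalSpace.separableSpace_iff_countable.mp inferInstance
  -- a neighborhood of 1 meeting Γ only in 1
  obtain ⟨W, hWo, hW1, hWΓ⟩ : ∃ W : Set G, IsOpen W ∧ (1:G) ∈ W ∧
      ∀ γ : G, γ ∈ Γ → γ ∈ W → γ = 1 := by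
    obtain ⟨W, hWo, hW⟩ := isOpen_induced_iff.mp (isOpen_discrete ({1} : Set Γ))
    refine ⟨W, hWo, ?_, ?_⟩
    · have : (1 : Γ) ∈ Subtype.val ⁻¹' W := by rw [hW]; rfl
      exact this
    · intro γ hγ hγW
      have : (⟨γ, hγ⟩ : Γ) ∈ Subtype.val ⁻¹' W := hγW
      rw [hW] at this
      simpa using congrArg Subtype.val this
  obtain ⟨V₀, hV₀o, hV₀1, hV₀W⟩ := exists_open_nhds_one_mul_subset (hWo.mem_nhds hW1)
  set V : Set G := V₀ ∩ V₀⁻¹ with hV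
  have hVo : IsOpen V := hV₀o.inter hV₀o.inv
  have hV1 : (1:G) ∈ V := ⟨hV₀1, by simpa using hV₀1⟩
  have hVdiff : ∀ a ∈ V, ∀ b ∈ V, a⁻¹ * b ∈ W := by
    intro a ha b hb
    exact hV₀W (Set.mul_mem_mul (Set.mem_inv.mp ha.2) hb.1)
  set d : ℕ → G := TopologicalSpace.denseSeq G with hd'
  have hd : DenseRange d := TopologicalSpace.denseRange_denseSeq G
  set Vi : ℕ → Set G := fun i => (d i) • V with hVi
  have hViopen : ∀ i, IsOpen (Vi i) := fun i => hVo.smul _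
  have hcover : ∀ g : G, ∃ i, g ∈ Vi i := by
    intro g
    obtain ⟨i, hi⟩ := hd.exists_mem_open (hVo.inv.smul g)
      ⟨g, by simpa [Set.mem_smul_set_iff_inv_smul_mem] using Set.inv_mem_inv.mpr hV1⟩
    refine ⟨i, ?_⟩
    rw [hVi]
    rw [Set.mem_smul_set_iff_inv_smul_mem]
    have : g⁻¹ * d i ∈ V⁻¹ := by
      simpa [Set.mem_smul_set_iff_inv_smul_mem, smul_eq_mul] using hi
    simpa [smul_eq_mul] using Set.mem_inv.mp this
  -- saturation
  set sat : Set G → Set G := fun A => ⋃ γ : Γ, (fun g => g * (γ:G)) ⁻¹' A with hsat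
  have mem_sat : ∀ (A : Set G) (g : G), g ∈ sat A ↔ ∃ γ : Γ, g * (γ:G) ∈ A := by
    intro A g; simp [hsat]
  have sat_meas : ∀ A : Set G, MeasurableSet A → MeasurableSet (sat A) := by
    intro A hA
    exact MeasurableSet.iUnion fun γ => hA.preimage (measurable_mul_const _)
  have sat_of_rel : ∀ (A : Set G) (a g : G), a ∈ A →
      (QuotientGroup.mk a : G ⧸ Γ) = QuotientGroup.mk g → g ∈ sat A := by
    intro A a g ha hrel
    have hmem : g⁻¹ * a ∈ Γ := QuotientGroup.eq.mp hrel.symm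
    refine (mem_sat A g).mpr ⟨⟨g⁻¹ * a, hmem⟩, ?_⟩
    simpa [mul_assoc] using ha
  have rel_of_sat : ∀ (A : Set G) (g : G), g ∈ sat A →
      ∃ a ∈ A, (QuotientGroup.mk a : G ⧸ Γ) = QuotientGroup.mk g := by
    intro A g hg
    obtain ⟨γ, hγ⟩ := (mem_sat A g).mp hg
    exact ⟨g * γ, hγ, QuotientGroup.mk_mul_of_mem g γ.2⟩
  set D : ℕ → Set G := fun i => Vi i \ sat (⋃ j < i, Vi j) with hD
  have hDmeas : ∀ i, MeasurableSet (D i) := by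
    intro i
    exact ((hViopen i).measurableSet).diff
      (sat_meas _ (MeasurableSet.biUnion (Set.to_countable _) fun j _ => (hViopen j).measurableSet))
  have key : ∀ x : G ⧸ Γ, ∃! g, (QuotientGroup.mk g : G ⧸ Γ) = x ∧ g ∈ ⋃ i, D i := by
    intro x
    obtain ⟨g₀, hg₀⟩ := QuotientGroup.mk_surjective x
    have hex : ∃ i, ∃ g : G, (QuotientGroup.mk g : G ⧸ Γ) = x ∧ g ∈ Vi i := by
      obtain ⟨i, hi⟩ := hcover g₀; exact ⟨i, g₀, hg₀, hi⟩
    obtain ⟨g, hgx, hgVi⟩ := Nat.find_spec hex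
    have hgD : g ∈ D (Nat.find hex) := by
      refine ⟨hgVi, fun hgsat => ?_⟩
      obtain ⟨a, haU, hax⟩ := rel_of_sat _ _ hgsat
      obtain ⟨j, hji, haj⟩ : ∃ j, j < Nat.find hex ∧ a ∈ Vi j := by simpa using haU
      exact Nat.find_min hex hji ⟨a, by rw [hax, hgx], haj⟩
    have same_i : ∀ i' i'' g' g'', i' < i'' → g' ∈ D i' → g'' ∈ D i'' →
        (QuotientGroup.mk g' : G ⧸ Γ) = QuotientGroup.mk g'' → False := by
      intro i' i'' g' g'' hlt h1 h2 hrel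
      refine h2.2 (sat_of_rel _ g' g'' ?_ hrel)
      exact Set.mem_biUnion hlt h1.1
    refine ⟨g, ⟨hgx, Set.mem_iUnion.mpr ⟨_, hgD⟩⟩, ?_⟩
    rintro g' ⟨hg'x, hg'D⟩
    obtain ⟨i', hg'⟩ := Set.mem_iUnion.mp hg'D
    have hrel : (QuotientGroup.mk g' : G ⧸ Γ) = QuotientGroup.mk g := by rw [hg'x, hgx]
    have hii : i' = Nat.find hex := by
      rcases lt_trichotomy i' (Nat.find hex) with h | h | h
      · exact absurd (same_i _ _ _ _ h hg' hgD hrel) not_false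
      · exact h
      · exact absurd (same_i _ _ _ _ h hgD hg' hrel.symm) not_false
    rw [hii] at hg'
    have h1 : (d (Nat.find hex))⁻¹ * g ∈ V := by
      have hmem : g ∈ d (Nat.find hex) • V := hgVi
      simpa [smul_eq_mul] using Set.mem_smul_set_iff_inv_smul_mem.mp hmem
    have h2 : (d (Nat.find hex))⁻¹ * g' ∈ V := by
      have hmem : g' ∈ d (Nat.find hex) • V := hg'.1
      simpa [smul_eq_mul] using Set.mem_smul_set_iff_inv_smul_mem.mp hmem
    have hw : g⁻¹ * g' ∈ W := by
      have := hVdiff _ h1 _ h2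
      simpa [mul_assoc] using this
    have hγ : g⁻¹ * g' ∈ Γ := QuotientGroup.eq.mp hrel.symm
    exact (inv_mul_eq_one.mp (hWΓ _ hγ hw)).symm
  choose s hs huniq using key
  refine ⟨s, ?_, fun x => (hs x).1⟩
  intro A hA
  have himg : s ⁻¹' A = QuotientGroup.mk '' (A ∩ ⋃ i, D i) := by
    ext x
    constructor
    · intro hx; exact ⟨s x, ⟨hx, (hs x).2⟩, (hs x).1⟩
    · rintro ⟨g, ⟨hgA, hgD⟩, rfl⟩
      have hgs : g = s (QuotientGroup.mk g) := huniq (QuotientGroup.mk g) g ⟨rfl, hgD⟩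
      exact Set.mem_preimage.mpr (hgs ▸ hgA)
  rw [himg]
  set B : Set (G ⧸ Γ) := (QuotientGroup.mk : G → G ⧸ Γ) '' (A ∩ ⋃ i, D i) with hB
  have hpre : (QuotientGroup.mk : G → G ⧸ Γ) ⁻¹' B = sat (A ∩ ⋃ i, D i) := by
    ext g
    simp only [Set.mem_preimage, Set.mem_image]
    constructor
    · rintro ⟨a, ha, hag⟩; exact sat_of_rel _ a g ha hag
    · intro hg; obtain ⟨a, ha, hag⟩ := rel_of_sat _ _ hg; exact ⟨a, ha, hag⟩
  have hBm : MeasurableSet ((QuotientGroup.mk : G → G ⧸ Γ) ⁻¹' B) := by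
    rw [hpre]
    exact sat_meas _ (hA.inter (MeasurableSet.iUnion hDmeas))
  exact measurableSet_quotient.mpr hBm

/-- If a measurable set `E ⊆ G/Γ` has `μ_G`-null preimage in `G`, then for any
Borel probability measure `λ` on `G/Γ` and any bounded nonempty open `U ⊆ G`, the Haar-averaged
measure `ν(A) = ∫_{u ∈ U} (u_*λ)(A) dμ_G(u)` satisfies `ν(E) = 0`. -/
theorem stmt0 {G : Type*} [Group G] [TopologicalSpace G] [IsTopologicalGroup G]
    [LocallyCompactSpace G] [SecondCountableTopology G]
    [MeasurableSpace G] [BorelSpace G]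
    (μG : Measure G) [μG.IsHaarMeasure]
    (Γ : Subgroup G) (hΓ : DiscreteTopology Γ)
    (E : Set (G ⧸ Γ)) (hE : MeasurableSet E)
    (hnull : μG ((QuotientGroup.mk : G → G ⧸ Γ) ⁻¹' E) = 0)
    (lam : Measure (G ⧸ Γ)) [IsProbabilityMeasure lam]
    (U : Set G) (hUopen : IsOpen U) (hUne : U.Nonempty) (hUbdd : IsCompact (closure U)) :
    ∫⁻ u in U, (Measure.map (fun x : G ⧸ Γ => u • x) lam) E ∂μG = 0 := by
  classical
  obtain ⟨s, hs_meas, hs_sec⟩ := exists_measurable_section_aux Γ hΓ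
  have hmk_meas : Measurable (QuotientGroup.mk : G → G ⧸ Γ) := measurable_quotient_mk''
  set σ : Measure G := lam.map s with hσ
  have hlam : lam = σ.map (QuotientGroup.mk : G → G ⧸ Γ) := by
    rw [hσ, Measure.map_map hmk_meas hs_meas]
    have : (QuotientGroup.mk : G → G ⧸ Γ) ∘ s = id := funext hs_sec
    rw [this, Measure.map_id]
  set N : Set G := (QuotientGroup.mk : G → G ⧸ Γ) ⁻¹' E with hN'
  have hN : MeasurableSet N := hmk_meas hE
  have hptw : ∀ (c : G → G) (u : G), N.indicator (1 : G → ℝ≥0∞) (c u)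
      = ((c ⁻¹' N).indicator (1 : G → ℝ≥0∞)) u := by
    intro c u
    by_cases h : c u ∈ N <;> simp [Set.indicator_apply, h, Set.mem_preimage]
  have hsmul_meas : ∀ u : G, Measurable (fun x : G ⧸ Γ => u • x) := by
    intro u
    exact _root_.measurable_from_quotient.mpr (hmk_meas.comp (measurable_const_mul u))
  -- rewrite the integrand
  have hint : ∀ u : G, (Measure.map (fun x : G ⧸ Γ => u • x) lam) E
      = ∫⁻ g, N.indicator 1 (u * g) ∂σ := by
    intro u
    rw [Measure.map_apply (hsmul_meas u) hE]
    have h1 : MeasurableSet ((fun x : G ⧸ Γ => u • x) ⁻¹' E) :=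
      hE.preimage (hsmul_meas u)
    rw [hlam, Measure.map_apply hmk_meas h1]
    have h2 : (QuotientGroup.mk : G → G ⧸ Γ) ⁻¹' ((fun x : G ⧸ Γ => u • x) ⁻¹' E)
        = (fun g => u * g) ⁻¹' N := rfl
    rw [h2, ← lintegral_indicator_one (hN.preimage (measurable_const_mul u))]
    exact (lintegral_congr (hptw (fun g => u * g))).symm
  calc ∫⁻ u in U, (Measure.map (fun x : G ⧸ Γ => u • x) lam) E ∂μG
      = ∫⁻ u in U, ∫⁻ g, N.indicator 1 (u * g) ∂σ ∂μG := by
        exact lintegral_congr fun u => hint u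
    _ = ∫⁻ g, ∫⁻ u in U, N.indicator 1 (u * g) ∂μG ∂σ := by
        haveI : IsFiniteMeasure (μG.restrict U) := by
          constructor
          rw [Measure.restrict_apply_univ]
          exact lt_of_le_of_lt (measure_mono subset_closure) hUbdd.measure_lt_top
        haveI : IsProbabilityMeasure σ := Measure.isProbabilityMeasure_map hs_meas.aemeasurable
        exact lintegral_lintegral_swap
          (((measurable_one.indicator hN).comp
            (measurable_fst.mul measurable_snd)).aemeasurable)
    _ = 0 := by
        have hz : ∀ g : G, ∫⁻ u in U, N.indicator 1 (u * g) ∂μG = 0 := by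
          intro g
          have hmap0 : (μG.map (· * g)) N = 0 := by
            have hac : (μG.map (· * g)) ≪ μG :=
              Measure.absolutelyContinuous_isHaarMeasure _ _
            exact hac hnull
          have : ∫⁻ u, N.indicator 1 (u * g) ∂μG = 0 := by
            rw [lintegral_congr (hptw (fun u => u * g)),
              lintegral_indicator_one (hN.preimage (measurable_mul_const g)),
              ← Measure.map_apply (measurable_mul_const g) hN]
            exact hmap0
          refine le_antisymm ?_ zero_le
          rw [← this]
          exact lintegral_mono' Measure.restrict_le_self le_rfl
        rw [lintegral_congr hz, lintegral_zero]
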